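/- Let X, X' ∈ ℝ^{n×d} be matrices, let all weights be uniform (w = w' = 𝟙_n/n, v = v' = 𝟙_d/d), and let L : ℝ×ℝ → ℝ be any cost function. Then COOT(X, X', w, w', v, v') = min over permutations σ₁ of {1,…,n} and σ₂ of {1,…,d} of (1/(nd)) ∑_{i=1}^n ∑_{k=1}^d L(X_{i,k}, X'_{σ₁(i),σ₂(k)}); in particular the infimum defining COOT is attained at a pair of transport plans supported on permutations (π^s_{i,j} = (1/n)·[j = σ₁(i)], π^v_{k,l} = (1/d)·[l = σ₂(k)]). -/

import Mathlib

open Finset Matrix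

/-- A probability vector: nonnegative entries summing to 1. -/
def IsProbVec {n : ℕ} (w : Fin n → ℝ) : Prop :=
  (∀ i, 0 ≤ w i) ∧ ∑ i, w i = 1

/-- The transport polytope `Π(w, w')`. -/
def TransportPolytope {n n' : ℕ} (w : Fin n → ℝ) (w' : Fin n' → ℝ) :
    Set (Matrix (Fin n) (Fin n') ℝ) :=
  {π | (∀ i j, 0 ≤ π i j) ∧ (∀ i, ∑ j, π i j = w i) ∧ (∀ j, ∑ i, π i j = w' j)}

/-- The CO-Optimal Transport objective. -/
def cootCost {n d n' d' : ℕ} (L : ℝ → ℝ → ℝ)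
    (X : Matrix (Fin n) (Fin d) ℝ) (X' : Matrix (Fin n') (Fin d') ℝ)
    (πs : Matrix (Fin n) (Fin n') ℝ) (πv : Matrix (Fin d) (Fin d') ℝ) : ℝ :=
  ∑ i, ∑ j, ∑ k, ∑ l, L (X i k) (X' j l) * πs i j * πv k l

/-- The CO-Optimal Transport value. -/
noncomputable def COOT {n d n' d' : ℕ} (L : ℝ → ℝ → ℝ)
    (X : Matrix (Fin n) (Fin d) ℝ) (X' : Matrix (Fin n') (Fin d') ℝ)
    (w : Fin n → ℝ) (w' : Fin n' → ℝ) (v : Fin d → ℝ) (v' : Fin d' → ℝ) : ℝ :=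
  sInf {r | ∃ πs ∈ TransportPolytope w w', ∃ πv ∈ TransportPolytope v v',
    r = cootCost L X X' πs πv}


/-- permutation transport plan -/
noncomputable def permPlan (n : ℕ) (σ : Equiv.Perm (Fin n)) : Matrix (Fin n) (Fin n) ℝ :=
  Matrix.of fun i j => if j = σ i then (n : ℝ)⁻¹ else 0

lemma permPlan_mem {n : ℕ} (σ : Equiv.Perm (Fin n)) :
    permPlan n σ ∈ TransportPolytope (fun _ : Fin n => (n : ℝ)⁻¹)
      (fun _ : Fin n => (n : ℝ)⁻¹) := by
  refine ⟨fun i j => ?_, fun i => ?_, fun j => ?_⟩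
  · dsimp [permPlan]; split <;> positivity
  · simp [permPlan]
  · simp only [permPlan, Matrix.of_apply]
    have he : ∀ i : Fin n, (if j = σ i then (n : ℝ)⁻¹ else 0)
        = (if i = σ.symm j then (n : ℝ)⁻¹ else 0) := fun i =>
      if_congr ⟨fun h => by simp [h], fun h => by simp [h]⟩ rfl rfl
    rw [Finset.sum_congr rfl fun i _ => he i]
    simp

lemma cootCost_smul_left {n d n' d' : ℕ} (L : ℝ → ℝ → ℝ)
    (X : Matrix (Fin n) (Fin d) ℝ) (X' : Matrix (Fin n') (Fin d') ℝ)
    (πv : Matrix (Fin d) (Fin d') ℝ) (c : ℝ) (M : Matrix (Fin n) (Fin n') ℝ) :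
    cootCost L X X' (c • M) πv = c * cootCost L X X' M πv := by
  simp only [cootCost, Matrix.smul_apply, smul_eq_mul, Finset.mul_sum]
  exact Finset.sum_congr rfl fun i _ => Finset.sum_congr rfl fun j _ =>
    Finset.sum_congr rfl fun k _ => Finset.sum_congr rfl fun l _ => by ring

lemma cootCost_add_left {n d n' d' : ℕ} (L : ℝ → ℝ → ℝ)
    (X : Matrix (Fin n) (Fin d) ℝ) (X' : Matrix (Fin n') (Fin d') ℝ)
    (πv : Matrix (Fin d) (Fin d') ℝ) (M N : Matrix (Fin n) (Fin n') ℝ) :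
    cootCost L X X' (M + N) πv = cootCost L X X' M πv + cootCost L X X' N πv := by
  simp only [cootCost, Matrix.add_apply, mul_add, add_mul, Finset.sum_add_distrib]

lemma cootCost_smul_right {n d n' d' : ℕ} (L : ℝ → ℝ → ℝ)
    (X : Matrix (Fin n) (Fin d) ℝ) (X' : Matrix (Fin n') (Fin d') ℝ)
    (πs : Matrix (Fin n) (Fin n') ℝ) (c : ℝ) (M : Matrix (Fin d) (Fin d') ℝ) :
    cootCost L X X' πs (c • M) = c * cootCost L X X' πs M := by
  simp only [cootCost, Matrix.smul_apply, smul_eq_mul, Finset.mul_sum]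
  exact Finset.sum_congr rfl fun i _ => Finset.sum_congr rfl fun j _ =>
    Finset.sum_congr rfl fun k _ => Finset.sum_congr rfl fun l _ => by ring

lemma cootCost_add_right {n d n' d' : ℕ} (L : ℝ → ℝ → ℝ)
    (X : Matrix (Fin n) (Fin d) ℝ) (X' : Matrix (Fin n') (Fin d') ℝ)
    (πs : Matrix (Fin n) (Fin n') ℝ) (M N : Matrix (Fin d) (Fin d') ℝ) :
    cootCost L X X' πs (M + N) = cootCost L X X' πs M + cootCost L X X' πs N := by
  simp only [cootCost, Matrix.add_apply, mul_add, add_mul, Finset.sum_add_distrib]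

lemma cootCost_sum_left {n d n' d' : ℕ} {ι : Type*} [DecidableEq ι] (s : Finset ι) (L : ℝ → ℝ → ℝ)
    (X : Matrix (Fin n) (Fin d) ℝ) (X' : Matrix (Fin n') (Fin d') ℝ)
    (πv : Matrix (Fin d) (Fin d') ℝ) (a : ι → ℝ) (M : ι → Matrix (Fin n) (Fin n') ℝ) :
    cootCost L X X' (∑ t ∈ s, a t • M t) πv = ∑ t ∈ s, a t * cootCost L X X' (M t) πv := by
  induction s using Finset.induction_on with
  | empty => simp [cootCost]
  | insert _ _ h ih =>
      rw [Finset.sum_insert h, Finset.sum_insert h, cootCost_add_left,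
        cootCost_smul_left, ih]

lemma cootCost_sum_right {n d n' d' : ℕ} {ι : Type*} [DecidableEq ι] (s : Finset ι) (L : ℝ → ℝ → ℝ)
    (X : Matrix (Fin n) (Fin d) ℝ) (X' : Matrix (Fin n') (Fin d') ℝ)
    (πs : Matrix (Fin n) (Fin n') ℝ) (a : ι → ℝ) (M : ι → Matrix (Fin d) (Fin d') ℝ) :
    cootCost L X X' πs (∑ t ∈ s, a t • M t) = ∑ t ∈ s, a t * cootCost L X X' πs (M t) := by
  induction s using Finset.induction_on with
  | empty => simp [cootCost]
  | insert _ _ h ih =>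
      rw [Finset.sum_insert h, Finset.sum_insert h, cootCost_add_right,
        cootCost_smul_right, ih]

/-- decomposition of a uniform transport plan into permutation plans -/
lemma exists_decomp {n : ℕ} (hn : 0 < n) (π : Matrix (Fin n) (Fin n) ℝ)
    (hπ : π ∈ TransportPolytope (fun _ : Fin n => (n : ℝ)⁻¹) (fun _ : Fin n => (n : ℝ)⁻¹)) :
    ∃ a : Equiv.Perm (Fin n) → ℝ, (∀ σ, 0 ≤ a σ) ∧ ∑ σ, a σ = 1 ∧
      π = ∑ σ, a σ • permPlan n σ := by
  have hn' : (n : ℝ) ≠ 0 := Nat.cast_ne_zero.2 hn.ne'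
  obtain ⟨hpos, hrow, hcol⟩ := hπ
  have hds : (n : ℝ) • π ∈ doublyStochastic ℝ (Fin n) := by
    rw [mem_doublyStochastic_iff_sum]
    refine ⟨fun i j => by
      simp only [Matrix.smul_apply, smul_eq_mul]
      exact mul_nonneg (Nat.cast_nonneg n) (hpos i j), fun i => ?_, fun j => ?_⟩
    · simp only [Matrix.smul_apply, smul_eq_mul, ← Finset.mul_sum, hrow]
      field_simp
    · simp only [Matrix.smul_apply, smul_eq_mul, ← Finset.mul_sum, hcol]
      field_simp
  obtain ⟨a, ha0, ha1, hsum⟩ := exists_eq_sum_perm_of_mem_doublyStochastic hds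
  refine ⟨a, ha0, ha1, ?_⟩
  have key : ∀ σ : Equiv.Perm (Fin n), permPlan n σ = (n : ℝ)⁻¹ • σ.permMatrix ℝ := by
    intro σ
    ext i j
    simp only [permPlan, Matrix.of_apply, Matrix.smul_apply, Equiv.Perm.permMatrix,
      PEquiv.toMatrix_apply, Equiv.toPEquiv_apply, Option.mem_def, Option.some.injEq,
      smul_eq_mul, mul_ite, mul_one, mul_zero]
    exact if_congr eq_comm rfl rfl
  calc π = (n : ℝ)⁻¹ • ((n : ℝ) • π) := by rw [smul_smul]; field_simp; rw [one_smul]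
    _ = (n : ℝ)⁻¹ • ∑ σ, a σ • σ.permMatrix ℝ := by rw [hsum]
    _ = ∑ σ, a σ • ((n : ℝ)⁻¹ • σ.permMatrix ℝ) := by
        rw [Finset.smul_sum]; exact Finset.sum_congr rfl fun σ _ => smul_comm _ _ _
    _ = ∑ σ, a σ • permPlan n σ := by simp_rw [key]

lemma permPlan_cost {n d : ℕ} (X X' : Matrix (Fin n) (Fin d) ℝ) (L : ℝ → ℝ → ℝ)
    (σ₁ : Equiv.Perm (Fin n)) (σ₂ : Equiv.Perm (Fin d)) :
    cootCost L X X' (permPlan n σ₁) (permPlan d σ₂)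
      = (1 / ((n : ℝ) * (d : ℝ))) * ∑ i, ∑ k, L (X i k) (X' (σ₁ i) (σ₂ k)) := by
  simp only [cootCost, permPlan, Matrix.of_apply, mul_ite, ite_mul, mul_zero, zero_mul,
    Finset.sum_ite_eq', Finset.mem_univ, if_true]
  rw [one_div, mul_inv, Finset.mul_sum]
  refine Finset.sum_congr rfl fun i _ => ?_
  rw [Finset.sum_comm, Finset.mul_sum]
  simp only [Finset.sum_ite_eq', Finset.mem_univ, if_true]
  exact Finset.sum_congr rfl fun k _ => by ring

theorem coot_eq_min_over_perms {n d : ℕ} (hn : 0 < n) (hd : 0 < d)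
    (X X' : Matrix (Fin n) (Fin d) ℝ) (L : ℝ → ℝ → ℝ) :
    ∃ (σ₁ : Equiv.Perm (Fin n)) (σ₂ : Equiv.Perm (Fin d)),
      COOT L X X' (fun _ => (n : ℝ)⁻¹) (fun _ => (n : ℝ)⁻¹)
          (fun _ => (d : ℝ)⁻¹) (fun _ => (d : ℝ)⁻¹)
        = (1 / ((n : ℝ) * (d : ℝ))) * ∑ i, ∑ k, L (X i k) (X' (σ₁ i) (σ₂ k)) ∧
      (∀ (τ₁ : Equiv.Perm (Fin n)) (τ₂ : Equiv.Perm (Fin d)),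
        (1 / ((n : ℝ) * (d : ℝ))) * ∑ i, ∑ k, L (X i k) (X' (σ₁ i) (σ₂ k))
          ≤ (1 / ((n : ℝ) * (d : ℝ))) * ∑ i, ∑ k, L (X i k) (X' (τ₁ i) (τ₂ k))) ∧
      (Matrix.of fun i j => if j = σ₁ i then (n : ℝ)⁻¹ else 0) ∈
        TransportPolytope (fun _ : Fin n => (n : ℝ)⁻¹) (fun _ : Fin n => (n : ℝ)⁻¹) ∧
      (Matrix.of fun k l => if l = σ₂ k then (d : ℝ)⁻¹ else 0) ∈
        TransportPolytope (fun _ : Fin d => (d : ℝ)⁻¹) (fun _ : Fin d => (d : ℝ)⁻¹) ∧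
      cootCost L X X' (Matrix.of fun i j => if j = σ₁ i then (n : ℝ)⁻¹ else 0)
          (Matrix.of fun k l => if l = σ₂ k then (d : ℝ)⁻¹ else 0)
        = COOT L X X' (fun _ => (n : ℝ)⁻¹) (fun _ => (n : ℝ)⁻¹)
            (fun _ => (d : ℝ)⁻¹) (fun _ => (d : ℝ)⁻¹) := by
  -- the cost of a pair of permutations
  set g : Equiv.Perm (Fin n) × Equiv.Perm (Fin d) → ℝ :=
    fun p => cootCost L X X' (permPlan n p.1) (permPlan d p.2) with hg
  obtain ⟨p₀, -, hp₀⟩ := Finset.exists_min_image (Finset.univ)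
    g ⟨(1, 1), Finset.mem_univ _⟩
  obtain ⟨σ₁, σ₂⟩ := p₀
  set m := g (σ₁, σ₂) with hm
  -- the lower bound for any feasible pair
  have lower : ∀ πs ∈ TransportPolytope (fun _ : Fin n => (n : ℝ)⁻¹)
      (fun _ : Fin n => (n : ℝ)⁻¹), ∀ πv ∈ TransportPolytope (fun _ : Fin d => (d : ℝ)⁻¹)
      (fun _ : Fin d => (d : ℝ)⁻¹), m ≤ cootCost L X X' πs πv := by
    intro πs hπs πv hπv
    obtain ⟨a, ha0, ha1, hπsa⟩ := exists_decomp hn πs hπs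
    obtain ⟨b, hb0, hb1, hπvb⟩ := exists_decomp hd πv hπv
    rw [hπsa, hπvb, cootCost_sum_left]
    simp_rw [cootCost_sum_right]
    have expand : ∀ σ : Equiv.Perm (Fin n),
        m * a σ ≤ a σ * ∑ τ, b τ * cootCost L X X' (permPlan n σ) (permPlan d τ) := by
      intro σ
      rw [mul_comm m (a σ)]
      refine mul_le_mul_of_nonneg_left ?_ (ha0 σ)
      calc m = (∑ τ, b τ) * m := by rw [hb1, one_mul]
        _ = ∑ τ, b τ * m := by rw [Finset.sum_mul]
        _ ≤ ∑ τ, b τ * cootCost L X X' (permPlan n σ) (permPlan d τ) := by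
            refine Finset.sum_le_sum fun τ _ => mul_le_mul_of_nonneg_left ?_ (hb0 τ)
            exact hp₀ (σ, τ) (Finset.mem_univ _)
    calc m = (∑ σ, a σ) * m := by rw [ha1, one_mul]
      _ = ∑ σ, m * a σ := by rw [Finset.sum_mul]; exact Finset.sum_congr rfl fun _ _ => mul_comm _ _
      _ ≤ _ := Finset.sum_le_sum fun σ _ => expand σ
  -- m is in the feasible value set
  have hmem : m ∈ {r | ∃ πs ∈ TransportPolytope (fun _ : Fin n => (n : ℝ)⁻¹)
      (fun _ : Fin n => (n : ℝ)⁻¹), ∃ πv ∈ TransportPolytope (fun _ : Fin d => (d : ℝ)⁻¹)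
      (fun _ : Fin d => (d : ℝ)⁻¹), r = cootCost L X X' πs πv} :=
    ⟨permPlan n σ₁, permPlan_mem σ₁, permPlan d σ₂, permPlan_mem σ₂, rfl⟩
  have hCOOT : COOT L X X' (fun _ => (n : ℝ)⁻¹) (fun _ => (n : ℝ)⁻¹)
      (fun _ => (d : ℝ)⁻¹) (fun _ => (d : ℝ)⁻¹) = m := by
    refine le_antisymm (csInf_le ⟨m, ?_⟩ hmem) (le_csInf ⟨m, hmem⟩ ?_)
    · rintro r ⟨πs, hπs, πv, hπv, rfl⟩
      exact lower πs hπs πv hπv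
    · rintro r ⟨πs, hπs, πv, hπv, rfl⟩
      exact lower πs hπs πv hπv
  have hmval : m = (1 / ((n : ℝ) * (d : ℝ))) * ∑ i, ∑ k, L (X i k) (X' (σ₁ i) (σ₂ k)) :=
    permPlan_cost X X' L σ₁ σ₂
  refine ⟨σ₁, σ₂, by rw [hCOOT, hmval], fun τ₁ τ₂ => ?_, permPlan_mem σ₁, permPlan_mem σ₂, ?_⟩
  · rw [← hmval, ← permPlan_cost]
    exact hp₀ (τ₁, τ₂) (Finset.mem_univ _)
  · exact (hCOOT.symm : _)
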